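/- Let V be a finite-dimensional vector space over a finite field of odd characteristic, and let H be a subgroup of GL(V) such that: (i) V is an irreducible H-module; (ii) H is metacyclic, i.e., H has a normal cyclic subgroup C with H/C cyclic; (iii) the Sylow 2-subgroups of H are elementary abelian of order 4; (iv) H has no proper normal subgroup of odd index. Then the affine permutation group G = V ⋊ H acting on V is 2-moderate. -/

import Mathlib

open Pointwise

/-- The `p`-part of a natural number `n`: the largest power of `p` dividing `n`. -/
def pPart (p n : ℕ) : ℕ := p ^ n.factorization p

/-- A group `G` acting on `Ω` is `p`-moderate if there is a subset `Δ` of `Ω` whose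
setwise stabilizer `S` satisfies `1 < |S|_p < |G|_p`. -/
def IsPModerate (p : ℕ) (G : Type*) [Group G] (Ω : Type*) [MulAction G Ω] : Prop :=
  ∃ Δ : Set Ω,
    1 < pPart p (Nat.card (MulAction.stabilizer G Δ)) ∧
      pPart p (Nat.card (MulAction.stabilizer G Δ)) < pPart p (Nat.card G)

/-- The affine permutation group `V ⋊ H` on `V` determined by a subgroup `H` of `GL(V)`:
all permutations of `V` of the form `x ↦ h(x) + v` with `h ∈ H`, `v ∈ V`. -/
def affPerm {F V : Type*} [Field F] [AddCommGroup V] [Module F V]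
    (H : Subgroup (V →ₗ[F] V)ˣ) : Subgroup (Equiv.Perm V) where
  carrier := {σ | ∃ h ∈ H, ∃ v : V, ∀ x : V, σ x = (h : V →ₗ[F] V) x + v}
  one_mem' := ⟨1, H.one_mem, 0, fun x => by simp⟩
  mul_mem' := by
    rintro σ τ ⟨h, hH, v, hσ⟩ ⟨h', h'H, v', hτ⟩
    refine ⟨h * h', H.mul_mem hH h'H, (h : V →ₗ[F] V) v' + v, fun x => ?_⟩
    simp only [Equiv.Perm.mul_apply, hσ, hτ, Units.val_mul, Module.End.mul_apply, map_add]
    abel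
  inv_mem' := by
    rintro σ ⟨h, hH, v, hσ⟩
    refine ⟨h⁻¹, H.inv_mem hH, -(((h⁻¹ : (V →ₗ[F] V)ˣ) : V →ₗ[F] V) v), fun y => ?_⟩
    have key : σ (((h⁻¹ : (V →ₗ[F] V)ˣ) : V →ₗ[F] V) y +
        -(((h⁻¹ : (V →ₗ[F] V)ˣ) : V →ₗ[F] V) v)) = y := by
      rw [hσ, map_add, map_neg, ← Module.End.mul_apply, ← Module.End.mul_apply,
        ← Units.val_mul, mul_inv_cancel]
      simp
    calc σ⁻¹ y = σ⁻¹ (σ (((h⁻¹ : (V →ₗ[F] V)ˣ) : V →ₗ[F] V) y +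
        -(((h⁻¹ : (V →ₗ[F] V)ˣ) : V →ₗ[F] V) v))) := by rw [key]
    _ = _ := by simp


namespace AffModAux

variable {F V : Type*} [Field F] [AddCommGroup V] [Module F V]

/-- The permutation of `V` given by a unit of the endomorphism ring. -/
def unitPerm (h : (V →ₗ[F] V)ˣ) : Equiv.Perm V where
  toFun := (h : V →ₗ[F] V)
  invFun := ((h⁻¹ : (V →ₗ[F] V)ˣ) : V →ₗ[F] V)
  left_inv := fun x => by
    rw [← Module.End.mul_apply, ← Units.val_mul, inv_mul_cancel, Units.val_one,
      Module.End.one_apply]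
  right_inv := fun x => by
    rw [← Module.End.mul_apply, ← Units.val_mul, mul_inv_cancel, Units.val_one,
      Module.End.one_apply]

@[simp] lemma unitPerm_apply (h : (V →ₗ[F] V)ˣ) (x : V) :
    unitPerm h x = (h : V →ₗ[F] V) x := rfl

variable (H : Subgroup (V →ₗ[F] V)ˣ)

lemma unitPerm_mem {h : (V →ₗ[F] V)ˣ} (hh : h ∈ H) : unitPerm h ∈ affPerm H :=
  ⟨h, hh, 0, fun x => by simp⟩

/-- The embedding of `H` into the affine permutation group. -/
def emb : H →* affPerm H :=
  MonoidHom.mk' (fun h => ⟨unitPerm h.1, unitPerm_mem H h.2⟩) (by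
    intro a b
    ext x
    show unitPerm (a.1 * b.1) x = unitPerm a.1 (unitPerm b.1 x)
    simp)

@[simp] lemma emb_apply (h : H) (x : V) : ((emb H h : Equiv.Perm V)) x = (h.1 : V →ₗ[F] V) x :=
  rfl

lemma linPart_exists (σ : affPerm H) :
    ∃ h : H, ∀ x : V, (σ : Equiv.Perm V) x = (h.1 : V →ₗ[F] V) x + (σ : Equiv.Perm V) 0 := by
  obtain ⟨h, hh, v, hspec⟩ := σ.2
  refine ⟨⟨h, hh⟩, fun x => ?_⟩
  have h0 : (σ : Equiv.Perm V) 0 = v := by rw [hspec 0, map_zero, zero_add]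
  rw [hspec x, h0]

/-- The linear part of an affine permutation. -/
noncomputable def linPart (σ : affPerm H) : H := (linPart_exists H σ).choose

lemma linPart_spec (σ : affPerm H) (x : V) :
    (σ : Equiv.Perm V) x = ((linPart H σ).1 : V →ₗ[F] V) x + (σ : Equiv.Perm V) 0 :=
  (linPart_exists H σ).choose_spec x

lemma linPart_unique (σ : affPerm H) (h : H) (v : V)
    (hs : ∀ x : V, (σ : Equiv.Perm V) x = (h.1 : V →ₗ[F] V) x + v) : linPart H σ = h := by
  have h0 : (σ : Equiv.Perm V) 0 = v := by rw [hs 0, map_zero, zero_add]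
  have key : ∀ x : V, ((linPart H σ).1 : V →ₗ[F] V) x = (h.1 : V →ₗ[F] V) x := by
    intro x
    have := (linPart_spec H σ x).symm.trans (hs x)
    rw [h0] at this
    exact add_right_cancel this
  ext x
  exact key x

/-- The linear-part homomorphism. -/
noncomputable def linHom : affPerm H →* H :=
  MonoidHom.mk' (linPart H) (by
    intro a b
    refine linPart_unique H (a * b) (linPart H a * linPart H b)
      (((linPart H a).1 : V →ₗ[F] V) ((b : Equiv.Perm V) 0) + (a : Equiv.Perm V) 0) (fun x => ?_)
    have hab : ((a * b : affPerm H) : Equiv.Perm V) x = (a : Equiv.Perm V) ((b : Equiv.Perm V) x) :=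
      rfl
    rw [hab, linPart_spec H b x, linPart_spec H a, map_add, Submonoid.coe_mul, Units.val_mul,
      Module.End.mul_apply, add_assoc])

lemma linHom_spec (σ : affPerm H) (x : V) :
    (σ : Equiv.Perm V) x = ((linHom H σ).1 : V →ₗ[F] V) x + (σ : Equiv.Perm V) 0 :=
  linPart_spec H σ x

lemma linHom_emb (h : H) : linHom H (emb H h) = h :=
  linPart_unique H (emb H h) h 0 (fun x => by simp)

lemma emb_injective : Function.Injective (emb H) := by
  intro a b hab
  have := congrArg (linHom H) hab
  rwa [linHom_emb, linHom_emb] at this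

/-- Uniqueness of the involution in a finite cyclic group. -/
lemma cyclic_inv_unique {Γ : Type*} [Group Γ] [Finite Γ] [IsCyclic Γ] {x y : Γ}
    (hx : x ^ 2 = 1) (hy : y ^ 2 = 1) (hx1 : x ≠ 1) (hy1 : y ≠ 1) : x = y := by
  classical
  cases nonempty_fintype Γ
  by_contra hxy
  have hsub : ({1, x, y} : Finset Γ) ⊆ Finset.univ.filter (fun a => a ^ 2 = 1) := by
    intro a ha
    simp only [Finset.mem_insert, Finset.mem_singleton] at ha
    simp only [Finset.mem_filter, Finset.mem_univ, true_and]
    rcases ha with rfl | rfl | rfl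
    · exact one_pow 2
    · exact hx
    · exact hy
  have hcard : ({1, x, y} : Finset Γ).card = 3 := by
    rw [Finset.card_insert_of_notMem (by simp [Ne.symm hx1, Ne.symm hy1]),
      Finset.card_insert_of_notMem (by simp [hxy]), Finset.card_singleton]
  have := (Finset.card_le_card hsub).trans (IsCyclic.card_pow_eq_one_le (by norm_num : 0 < 2))
  omega

lemma card_map_inj {G₁ G₂ : Type*} [Group G₁] [Group G₂] {f : G₁ →* G₂}
    (hf : Function.Injective f) (K : Subgroup G₁) :
    Nat.card (K.map f) = Nat.card K := by
  exact Nat.card_congr ((Equiv.setCongr (Subgroup.coe_map f K)).trans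
    (Equiv.Set.image f (K : Set G₁) hf).symm)

end AffModAux

open AffModAux in
set_option maxHeartbeats 2000000 in
theorem affine_metacyclic_two_moderate
    (F V : Type*) [Field F] [Finite F] (hchar : Odd (ringChar F))
    [AddCommGroup V] [Module F V] [FiniteDimensional F V]
    (H : Subgroup (V →ₗ[F] V)ˣ)
    -- (i) V is an irreducible H-module
    (hirr : Nontrivial V ∧ ∀ W : Submodule F V,
      (∀ h ∈ H, ∀ v ∈ W, (h : V →ₗ[F] V) v ∈ W) → W = ⊥ ∨ W = ⊤)
    -- (ii) H is metacyclic: a normal cyclic subgroup C with H/C cyclic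
    (hmeta : ∃ C : Subgroup H, C.Normal ∧ IsCyclic C ∧
      ∃ g : H, ∀ x : H, ∃ n : ℤ, x⁻¹ * g ^ n ∈ C)
    -- (iii) the Sylow 2-subgroups of H are elementary abelian of order 4
    (hSyl : ∀ P : Sylow 2 H, Nat.card P = 4 ∧
      (∀ x y : P, x * y = y * x) ∧ ∀ x : P, x ^ 2 = 1)
    -- (iv) H has no proper normal subgroup of odd index
    (hO2 : ∀ N : Subgroup H, N.Normal → Odd N.index → N = ⊤) :
    IsPModerate 2 (affPerm H) V := by
  classical
  haveI : Finite V := Module.finite_of_finite F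
  haveI : Finite (V →ₗ[F] V) := Finite.of_injective _ DFunLike.coe_injective
  haveI : Fact (Nat.Prime 2) := ⟨Nat.prime_two⟩
  -- characteristic facts
  set p := ringChar F with hpdef
  have hp2 : p ≠ 2 := by
    intro h
    rw [h] at hchar
    exact (by decide : ¬ Odd 2) hchar
  have h2F : (2 : F) ≠ 0 := by
    intro h
    have h2 : ((2 : ℕ) : F) = 0 := by exact_mod_cast h
    have := (ringChar.spec F 2).mp h2
    rcases (Nat.dvd_prime Nat.prime_two).mp this with h1 | h1
    · have := (ringChar.spec F 1).mpr (h1 ▸ dvd_refl p)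
      simp at this
    · exact hp2 h1
  have h2V : ∀ v : V, v + v = 0 → v = 0 := by
    intro v hv
    have : (2 : F) • v = 0 := by rw [two_smul]; exact hv
    rcases smul_eq_zero.mp this with h | h
    · exact absurd h h2F
    · exact h
  have key : ∀ x : V, x = -x → x = 0 := fun x hx =>
    h2V x (eq_neg_iff_add_eq_zero.mp hx)
  have hpV : ∀ v : V, p • v = 0 := by
    intro v
    have hp0 : (p : F) = 0 := (ringChar.spec F p).mpr dvd_rfl
    rw [← Nat.cast_smul_eq_nsmul F, hp0, zero_smul]
  -- metacyclic data
  obtain ⟨C, hCnorm, hCcyc, g, hg⟩ := hmeta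
  haveI := hCnorm
  haveI := hCcyc
  -- the quotient is cyclic
  have hQcyc : IsCyclic (H ⧸ C) := by
    refine ⟨⟨(g : H ⧸ C), fun b => ?_⟩⟩
    obtain ⟨x, rfl⟩ := QuotientGroup.mk_surjective b
    obtain ⟨n, hn⟩ := hg x
    refine Subgroup.mem_zpowers_iff.mpr ⟨n, ?_⟩
    rw [← QuotientGroup.mk_zpow]
    exact (QuotientGroup.eq.mpr hn).symm
  -- a central involution z
  obtain ⟨z, hzC, hz2, hz1⟩ : ∃ z : H, z ∈ C ∧ z ^ 2 = 1 ∧ z ≠ 1 := by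
    by_contra hno
    push_neg at hno
    obtain ⟨P⟩ : Nonempty (Sylow 2 H) := inferInstance
    have hP4 := (hSyl P).1
    have hPsq := (hSyl P).2.2
    -- the composite P → H/C is injective
    set φ : (P : Subgroup H) →* H ⧸ C :=
      (QuotientGroup.mk' C).comp (P : Subgroup H).subtype with hφ
    have hφinj : Function.Injective φ := by
      refine (injective_iff_map_eq_one φ).mpr ?_
      intro x hx
      have hxC : (x : H) ∈ C := (QuotientGroup.eq_one_iff (x : H)).mp hx
      have hxsq : (x : H) ^ 2 = 1 := by
        have := hPsq x
        exact_mod_cast congrArg Subtype.val this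
      have : (x : H) = 1 := hno (x : H) hxC hxsq
      exact Subtype.ext this
    haveI : IsCyclic (P : Subgroup H) := by
      have e := MonoidHom.ofInjective hφinj
      exact isCyclic_of_surjective e.symm e.symm.surjective
    obtain ⟨γ, hγ⟩ := (inferInstance : IsCyclic (P : Subgroup H)).exists_generator
    have htop : Subgroup.zpowers γ = (⊤ : Subgroup (P : Subgroup H)) := by
      rw [eq_top_iff]
      exact fun x _ => hγ x
    have hord : orderOf γ = 4 := by
      have h1 := Nat.card_zpowers γ
      rw [htop, Subgroup.card_top] at h1
      rw [← h1]
      exact hP4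
    have : orderOf γ ∣ 2 := orderOf_dvd_of_pow_eq_one (hPsq γ)
    rw [hord] at this
    omega
  have hzcen : ∀ h : H, h * z = z * h := by
    intro h
    have hyC : h * z * h⁻¹ ∈ C := hCnorm.conj_mem z hzC h
    have hysq : (h * z * h⁻¹) ^ 2 = 1 := by
      have : (h * z * h⁻¹) ^ 2 = h * z ^ 2 * h⁻¹ := by
        rw [pow_two, pow_two]; group
      rw [this, hz2, mul_one, mul_inv_cancel]
    have hy1 : h * z * h⁻¹ ≠ 1 := by
      intro hcon
      apply hz1
      have := congrArg (fun w => h⁻¹ * w * h) hcon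
      simpa [mul_assoc] using this
    have := cyclic_inv_unique (Γ := C) (x := ⟨h * z * h⁻¹, hyC⟩) (y := ⟨z, hzC⟩)
      (by rw [Subtype.ext_iff]; push_cast; exact hysq)
      (by rw [Subtype.ext_iff]; push_cast; exact hz2)
      (by rw [Ne, Subtype.ext_iff]; push_cast; exact hy1)
      (by rw [Ne, Subtype.ext_iff]; push_cast; exact hz1)
    have hval : h * z * h⁻¹ = z := by
      have := Subtype.ext_iff.mp this
      push_cast at this
      exact this
    calc h * z = h * z * h⁻¹ * h := by group
    _ = z * h := by rw [hval]
  -- z acts as -1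
  set e : V →ₗ[F] V := ((z : (V →ₗ[F] V)ˣ) : V →ₗ[F] V) with hedef
  have hee : ∀ v : V, e (e v) = v := by
    intro v
    have h1 : ((z : (V →ₗ[F] V)ˣ) ^ 2 : (V →ₗ[F] V)ˣ) = 1 := by
      exact_mod_cast congrArg Subtype.val hz2
    have h2 : e * e = 1 := by
      have := congrArg Units.val h1
      rwa [Units.val_pow_eq_pow_val, pow_two, Units.val_one] at this
    calc e (e v) = (e * e) v := rfl
    _ = v := by rw [h2, Module.End.one_apply]
  have hecomm : ∀ (h : H) (v : V), e (((h : (V →ₗ[F] V)ˣ) : V →ₗ[F] V) v)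
      = ((h : (V →ₗ[F] V)ˣ) : V →ₗ[F] V) (e v) := by
    intro h v
    have h1 : (z : (V →ₗ[F] V)ˣ) * (h : (V →ₗ[F] V)ˣ) = h * z := by
      have := Subtype.ext_iff.mp (hzcen h).symm
      push_cast at this
      exact this
    have h2 := congrArg Units.val h1
    rw [Units.val_mul, Units.val_mul] at h2
    have h3 : e * ((h : (V →ₗ[F] V)ˣ) : V →ₗ[F] V)
        = ((h : (V →ₗ[F] V)ˣ) : V →ₗ[F] V) * e := by rw [hedef]; exact h2
    calc e (((h : (V →ₗ[F] V)ˣ) : V →ₗ[F] V) v)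
        = (e * ((h : (V →ₗ[F] V)ˣ) : V →ₗ[F] V)) v := rfl
    _ = (((h : (V →ₗ[F] V)ˣ) : V →ₗ[F] V) * e) v := by rw [h3]
    _ = _ := rfl
  have hneg : ∀ v : V, e v = -v := by
    have hcl : ∀ h ∈ H, ∀ v ∈ LinearMap.ker (e - 1), (h : V →ₗ[F] V) v ∈ LinearMap.ker (e - 1) := by
      intro h hh v hv
      rw [LinearMap.mem_ker, LinearMap.sub_apply, Module.End.one_apply] at hv ⊢
      rw [sub_eq_zero] at hv ⊢
      exact (hecomm ⟨h, hh⟩ v).trans (congrArg _ hv)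
    have hker : LinearMap.ker (e - 1) = ⊥ := by
      rcases hirr.2 (LinearMap.ker (e - 1)) hcl with h | h
      · exact h
      · exfalso
        apply hz1
        have he1 : e = 1 := by
          ext v
          have : v ∈ LinearMap.ker (e - 1) := h ▸ Submodule.mem_top
          have := LinearMap.mem_ker.mp this
          rw [LinearMap.sub_apply, Module.End.one_apply, sub_eq_zero] at this
          simpa using this
        exact Subtype.ext (Units.ext he1)
    intro v
    have h1 : (e - 1) (e v + v) = 0 := by
      rw [LinearMap.sub_apply, Module.End.one_apply, map_add, hee]
      abel
    have h2 : e v + v ∈ LinearMap.ker (e - 1) := LinearMap.mem_ker.mpr h1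
    rw [hker, Submodule.mem_bot] at h2
    exact eq_neg_of_add_eq_zero_left h2
  -- a noncentral involution t
  obtain ⟨P₀⟩ : Nonempty (Sylow 2 H) := inferInstance
  obtain ⟨t, ht2, ht1, htz⟩ : ∃ t : H, t ^ 2 = 1 ∧ t ≠ 1 ∧ t ≠ z := by
    by_contra hno
    push_neg at hno
    have hsq : ∀ x : P₀, (x : H) ^ 2 = 1 := by
      intro x
      have := (hSyl P₀).2.2 x
      rw [Subtype.ext_iff] at this
      push_cast at this
      exact this
    have hinj : Function.Injective (fun x : P₀ => decide ((x : H) = 1)) := by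
      intro x y hxy
      have hiff : ((x : H) = 1) ↔ ((y : H) = 1) := by
        constructor
        · intro h; by_contra hy
          have := decide_eq_decide.mp hxy
          exact hy (this.mp h)
        · intro h; by_contra hx
          have := decide_eq_decide.mp hxy
          exact hx (this.mpr h)
      by_cases hx : (x : H) = 1
      · exact Subtype.ext (hx.trans (hiff.mp hx).symm)
      · have hy : (y : H) ≠ 1 := fun h => hx (hiff.mpr h)
        have h1 : (x : H) = z := hno _ (hsq x) hx
        have h2 : (y : H) = z := hno _ (hsq y) hy
        exact Subtype.ext (h1.trans h2.symm)
    have hle : Nat.card P₀ ≤ Nat.card Bool := Nat.card_le_card_of_injective _ hinj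
    have hb : Nat.card Bool = 2 := by simp [Nat.card_eq_fintype_card]
    rw [(hSyl P₀).1, hb] at hle
    omega
  set τ : V →ₗ[F] V := ((t : (V →ₗ[F] V)ˣ) : V →ₗ[F] V) with hτdef
  have hττ : ∀ v : V, τ (τ v) = v := by
    intro v
    have h1 : ((t : (V →ₗ[F] V)ˣ) ^ 2 : (V →ₗ[F] V)ˣ) = 1 := by
      exact_mod_cast congrArg Subtype.val ht2
    have h2 : τ * τ = 1 := by
      have := congrArg Units.val h1
      rwa [Units.val_pow_eq_pow_val, pow_two, Units.val_one] at this
    calc τ (τ v) = (τ * τ) v := rfl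
    _ = v := by rw [h2, Module.End.one_apply]
  -- eigenvectors
  obtain ⟨a, ha, ha0⟩ : ∃ a : V, τ a = a ∧ a ≠ 0 := by
    by_contra hcon
    push_neg at hcon
    apply htz
    have hall : ∀ v : V, τ v = -v := by
      intro v
      have h1 : τ (τ v + v) = τ v + v := by
        rw [map_add, hττ, add_comm]
      exact eq_neg_of_add_eq_zero_left (hcon _ h1)
    refine Subtype.ext (Units.ext (LinearMap.ext fun v => ?_))
    rw [show ((t : (V →ₗ[F] V)ˣ) : V →ₗ[F] V) v = τ v from rfl, hall v, ← hneg v]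
  obtain ⟨u, hu, hu0⟩ : ∃ u : V, τ u = -u ∧ u ≠ 0 := by
    by_contra hcon
    push_neg at hcon
    apply ht1
    have hall : ∀ v : V, τ v = v := by
      intro v
      have h1 : τ (τ v - v) = -(τ v - v) := by
        rw [map_sub, hττ]; abel
      have := hcon _ h1
      rw [sub_eq_zero] at this
      exact this
    refine Subtype.ext (Units.ext (LinearMap.ext fun v => ?_))
    rw [show ((t : (V →ₗ[F] V)ˣ) : V →ₗ[F] V) v = τ v from rfl, hall v]
    exact (Module.End.one_apply v).symm
  -- elementary linear facts
  have hau : a ≠ u := fun h => hu0 (key u (by rw [← hu, ← h, ha]))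
  have hau' : a ≠ -u := by
    intro h
    have h1 : a = u := by rw [← ha, h, map_neg, hu, neg_neg]
    exact hu0 (key u (h1.symm.trans h))
  have haug1 : a ≠ u + u := by
    intro h
    have h1 : a = -(u + u) := by rw [← ha, h, map_add, hu]; abel
    exact ha0 (key a (h1.trans (congrArg Neg.neg h).symm))
  have haug2 : a ≠ -(u + u) := by
    intro h
    have h1 : a = u + u := by rw [← ha, h, map_neg, map_add, hu]; abel
    exact ha0 (key a (h.trans (congrArg Neg.neg h1).symm))
  have hug1 : u ≠ a + a := by
    intro h
    have h1 : -u = a + a := by rw [← hu, h, map_add, ha]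
    exact hu0 (key u (h.trans h1.symm))
  have hug2 : -u ≠ a + a := by
    intro h
    have h1 : u = a + a := by
      rw [show u = τ (-u) from (by rw [map_neg, hu, neg_neg]), h, map_add, ha]
    exact hu0 (key u (h1.trans h.symm))
  -- the subset Δ
  set Δ : Set V := {0, a, u, -u} with hΔdef
  have hmemΔ : ∀ y : V, y ∈ Δ ↔ (y = 0 ∨ y = a ∨ y = u ∨ y = -u) := by
    intro y
    simp [hΔdef]
  set S := MulAction.stabilizer (affPerm H) Δ with hSdef
  have hstab_mem : ∀ σ : affPerm H, σ ∈ S → ∀ y ∈ Δ, (σ : Equiv.Perm V) y ∈ Δ := by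
    intro σ hσ y hy
    have h1 : σ • y ∈ σ • Δ := Set.smul_mem_smul_set hy
    rw [MulAction.mem_stabilizer_iff.mp hσ] at h1
    exact h1
  -- t stabilizes Δ
  have htG : emb H t ∈ S := by
    rw [hSdef, MulAction.mem_stabilizer_iff]
    ext y
    rw [Set.mem_smul_set]
    constructor
    · rintro ⟨x, hx, rfl⟩
      have happ : (emb H t) • x = τ x := rfl
      rw [happ]
      rcases (hmemΔ x).mp hx with h | h | h | h
      · rw [h, map_zero]; exact (hmemΔ 0).mpr (Or.inl rfl)
      · rw [h, ha]; exact (hmemΔ a).mpr (Or.inr (Or.inl rfl))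
      · rw [h, hu]; exact (hmemΔ (-u)).mpr (Or.inr (Or.inr (Or.inr rfl)))
      · rw [h, map_neg, hu, neg_neg]; exact (hmemΔ u).mpr (Or.inr (Or.inr (Or.inl rfl)))
    · intro hy
      rcases (hmemΔ y).mp hy with h | h | h | h
      · exact ⟨0, (hmemΔ 0).mpr (Or.inl rfl), by show τ 0 = y; rw [h, map_zero]⟩
      · exact ⟨a, (hmemΔ a).mpr (Or.inr (Or.inl rfl)), by show τ a = y; rw [h, ha]⟩
      · exact ⟨-u, (hmemΔ (-u)).mpr (Or.inr (Or.inr (Or.inr rfl))),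
          by show τ (-u) = y; rw [h, map_neg, hu, neg_neg]⟩
      · exact ⟨u, (hmemΔ u).mpr (Or.inr (Or.inr (Or.inl rfl))), by show τ u = y; rw [h, hu]⟩
  -- order 2 element in the stabilizer
  have ht2G : (emb H t) ^ 2 = 1 := by rw [← map_pow, ht2, map_one]
  have ht1G : emb H t ≠ 1 := by
    intro hcon
    exact ht1 (emb_injective H (hcon.trans (map_one (emb H)).symm))
  have hordS : orderOf (⟨emb H t, htG⟩ : S) = 2 := by
    refine orderOf_eq_prime ?_ ?_
    · rw [Subtype.ext_iff]; push_cast; exact ht2G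
    · rw [Ne, Subtype.ext_iff]; push_cast; exact ht1G
  -- 4 divides the order of the big group
  have hG4 : (2 : ℕ) ^ 2 ∣ Nat.card (affPerm H) := by
    have h1 : Nat.card ((P₀ : Subgroup H).map (emb H)) = 4 :=
      (card_map_inj (emb_injective H) _).trans (hSyl P₀).1
    have h2 := Subgroup.card_subgroup_dvd_card ((P₀ : Subgroup H).map (emb H))
    rw [h1] at h2
    exact (by norm_num : (2:ℕ)^2 = 4) ▸ h2
  -- 4 does not divide the order of the stabilizer
  have hno4 : ¬ ((2 : ℕ) ^ 2 ∣ Nat.card S) := by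
    intro h4
    obtain ⟨Q, hQcard⟩ := Sylow.exists_subgroup_card_pow_prime 2 (n := 2) h4
    set Q' : Subgroup (affPerm H) := Q.map S.subtype with hQ'
    have hQ'card : Nat.card Q' = 4 := by
      rw [hQ', card_map_inj (Subgroup.subtype_injective S) Q, hQcard]; norm_num
    have hQ'P : IsPGroup 2 Q' := IsPGroup.of_card (n := 2) (by rw [hQ'card]; norm_num)
    -- the linear-part map is injective on Q'
    have htrans : ∀ σ : affPerm H, σ ∈ Q' → linHom H σ = 1 → σ = 1 := by
      intro σ hσ h1
      obtain ⟨w, hw⟩ : ∃ w : V, (σ : Equiv.Perm V) 0 = w := ⟨_, rfl⟩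
      have hspec : ∀ x : V, (σ : Equiv.Perm V) x = x + w := by
        intro x
        have h2 := linHom_spec H σ x
        rw [h1, hw] at h2
        have h3 : (((1 : H) : (V →ₗ[F] V)ˣ) : V →ₗ[F] V) x = x := rfl
        rw [h3] at h2
        exact h2
      have hpow : ∀ (n : ℕ) (x : V), ((σ ^ n : affPerm H) : Equiv.Perm V) x = x + n • w := by
        intro n
        induction n with
        | zero => intro x; simp
        | succ n ih =>
          intro x
          have hmul : ((σ ^ (n+1) : affPerm H) : Equiv.Perm V) x
              = ((σ ^ n : affPerm H) : Equiv.Perm V) ((σ : Equiv.Perm V) x) := by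
            rw [pow_succ]
            rfl
          rw [hmul, hspec x, ih, succ_nsmul]
          abel
      have hσp : σ ^ p = 1 := by
        refine Subtype.ext (Equiv.ext fun x => ?_)
        show ((σ ^ p : affPerm H) : Equiv.Perm V) x = _
        rw [hpow p x, hpV w, add_zero]
        rfl
      obtain ⟨k, hk⟩ := hQ'P ⟨σ, hσ⟩
      have hk' : σ ^ ((2:ℕ) ^ k) = 1 := by
        rw [Subtype.ext_iff] at hk
        push_cast at hk
        exact hk
      have hd1 : orderOf σ ∣ p := orderOf_dvd_of_pow_eq_one hσp
      have hd2 : orderOf σ ∣ 2 ^ k := orderOf_dvd_of_pow_eq_one hk'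
      have hcop : Nat.Coprime (2 ^ k) p := (Nat.coprime_two_left.mpr hchar).pow_left k
      have hgcd : Nat.gcd (2 ^ k) p = 1 := hcop
      have hdd : orderOf σ ∣ 1 := by rw [← hgcd]; exact Nat.dvd_gcd hd2 hd1
      exact orderOf_eq_one_iff.mp (Nat.dvd_one.mp hdd)
    have hψ : Function.Injective ((linHom H).comp Q'.subtype) := by
      refine (injective_iff_map_eq_one _).mpr ?_
      intro q hq
      exact Subtype.ext (htrans q.1 q.2 hq)
    set R : Subgroup H := Q'.map (linHom H) with hR
    have hRrange : R = ((linHom H).comp Q'.subtype).range := by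
      rw [MonoidHom.range_comp, Subgroup.range_subtype]
    have hRcard : Nat.card R = 4 := by
      rw [hRrange]
      have h5 := Nat.card_congr (MonoidHom.ofInjective hψ).toEquiv
      rw [← h5, hQ'card]
    have hRP : IsPGroup 2 R := hQ'P.map (linHom H)
    obtain ⟨Q₀, hRQ₀⟩ := hRP.exists_le_sylow
    have hReq : R = (Q₀ : Subgroup H) := by
      refine Subgroup.eq_of_le_of_card_ge hRQ₀ ?_
      rw [hRcard, (hSyl Q₀).1]
    -- z lies in every Sylow 2-subgroup
    have hzQ₀ : z ∈ (Q₀ : Subgroup H) := by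
      have hN : IsPGroup 2 (Subgroup.zpowers z) := by
        intro gz
        refine ⟨1, ?_⟩
        obtain ⟨m, hm⟩ := Subgroup.mem_zpowers_iff.mp gz.2
        refine Subtype.ext ?_
        rw [SubgroupClass.coe_pow, OneMemClass.coe_one, show (2:ℕ) ^ 1 = 2 from rfl, ← hm]
        calc ((z ^ m) ^ (2:ℕ)) = (z ^ m) ^ ((2:ℕ):ℤ) := (zpow_natCast _ 2).symm
        _ = z ^ (m * ((2:ℕ):ℤ)) := (zpow_mul z m _).symm
        _ = z ^ (((2:ℕ):ℤ) * m) := by rw [mul_comm]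
        _ = (z ^ ((2:ℕ):ℤ)) ^ m := zpow_mul z _ m
        _ = (z ^ (2:ℕ)) ^ m := by rw [zpow_natCast]
        _ = 1 := by rw [hz2, one_zpow]
      haveI hNnorm : (Subgroup.zpowers z).Normal := by
        constructor
        intro n hn h
        obtain ⟨m, hm⟩ := Subgroup.mem_zpowers_iff.mp hn
        rw [← hm]
        have hcom : h * z ^ m * h⁻¹ = z ^ m := by
          have hc : Commute h z := hzcen h
          rw [(hc.zpow_right m).eq, mul_inv_cancel_right]
        rw [hcom]
        exact Subgroup.zpow_mem _ (Subgroup.mem_zpowers z) m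
      have hsup : IsPGroup 2 ((Q₀ : Subgroup H) ⊔ Subgroup.zpowers z : Subgroup H) :=
        IsPGroup.to_sup_of_normal_right Q₀.isPGroup' hN
      have heq := Q₀.is_maximal' hsup le_sup_left
      have : Subgroup.zpowers z ≤ (Q₀ : Subgroup H) := heq ▸ le_sup_right
      exact this (Subgroup.mem_zpowers z)
    -- pull z back to an element of Q' ≤ S
    rw [← hReq] at hzQ₀
    obtain ⟨σ, hσQ', hσz⟩ := Subgroup.mem_map.mp hzQ₀
    have hσS : σ ∈ S := Subgroup.map_subtype_le Q hσQ'
    -- σ is the point-reflection x ↦ -x + w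
    obtain ⟨w, hw⟩ : ∃ w : V, (σ : Equiv.Perm V) 0 = w := ⟨_, rfl⟩
    have hσspec : ∀ x : V, (σ : Equiv.Perm V) x = -x + w := by
      intro x
      have h2 := linHom_spec H σ x
      rw [hσz, hw] at h2
      rw [h2, show ((z : (V →ₗ[F] V)ˣ) : V →ₗ[F] V) x = e x from rfl, hneg x]
    have hmem : ∀ y, y ∈ Δ → -y + w ∈ Δ := by
      intro y hy
      have h3 := hstab_mem σ hσS y hy
      rwa [hσspec y] at h3
    -- case analysis showing this is impossible
    have hw0 : w = 0 ∨ w = a ∨ w = u ∨ w = -u := by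
      have := (hmemΔ _).mp (hmem 0 ((hmemΔ 0).mpr (Or.inl rfl)))
      simpa using this
    have hwa := (hmemΔ _).mp (hmem a ((hmemΔ a).mpr (Or.inr (Or.inl rfl))))
    have hwu := (hmemΔ _).mp (hmem u ((hmemΔ u).mpr (Or.inr (Or.inr (Or.inl rfl)))))
    rcases hw0 with hc | hc | hc | hc
    · -- w = 0
      rw [hc, add_zero] at hwa
      rcases hwa with h | h | h | h
      · exact ha0 (neg_eq_zero.mp h)
      · exact ha0 (key a h.symm)
      · exact hau' (neg_eq_iff_eq_neg.mp h)
      · exact hau (neg_inj.mp h)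
    · -- w = a
      rw [hc] at hwu
      rcases hwu with h | h | h | h
      · exact hau ((neg_add_eq_zero.mp h).symm)
      · have h2 : -u = 0 := by
          have := congrArg (fun x => x + (-a)) h
          simpa using this
        exact hu0 (neg_eq_zero.mp h2)
      · have h2 : a = u + u := by
          have := congrArg (fun x => u + x) h
          simpa using this
        exact haug1 h2
      · have h2 : a = 0 := by
          have := congrArg (fun x => u + x) h
          simpa using this
        exact ha0 h2
    · -- w = u
      rw [hc] at hwa
      rcases hwa with h | h | h | h
      · exact hau (neg_add_eq_zero.mp h)
      · have h2 : u = a + a := by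
          have := congrArg (fun x => a + x) h
          simpa using this
        exact hug1 h2
      · have h2 : 0 = a := by
          have := congrArg (fun x => a + (x + (-u))) h
          simpa using this
        exact ha0 h2.symm
      · have h3 : u = a + -u := by
          have := congrArg (fun x => a + x) h
          simpa using this
        have h2 : u + u = a := by
          have := congrArg (fun x => x + u) h3
          simpa using this
        exact haug1 h2.symm
    · -- w = -u
      rw [hc] at hwa
      rcases hwa with h | h | h | h
      · exact hau' (neg_add_eq_zero.mp h)
      · have h2 : -u = a + a := by
          have := congrArg (fun x => a + x) h
          simpa using this
        exact hug2 h2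
      · have h3 : -u = a + u := by
          have := congrArg (fun x => a + x) h
          simpa using this
        have h2 : -u + -u = a := by
          have := congrArg (fun x => x + -u) h3
          simpa using this
        have h4 : a = -(u + u) := by rw [← h2]; abel
        exact haug2 h4
      · have h2 : 0 = a := by
          have := congrArg (fun x => a + (x + u)) h
          simpa using this
        exact ha0 h2.symm
  -- conclude
  refine ⟨Δ, ?_, ?_⟩
  · have hS0 : Nat.card S ≠ 0 := Nat.card_pos.ne'
    have h2S : (2:ℕ) ∣ Nat.card S := by
      have hdvd := orderOf_dvd_natCard (⟨emb H t, htG⟩ : S)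
      rwa [hordS] at hdvd
    have hpos := Nat.Prime.factorization_pos_of_dvd Nat.prime_two hS0 h2S
    rw [← hSdef]
    simp only [pPart]
    exact Nat.one_lt_pow (by omega) (by norm_num)
  · have hfS : (Nat.card S).factorization 2 ≤ 1 := by
      by_contra hf
      push_neg at hf
      apply hno4
      calc ((2:ℕ) ^ 2) ∣ 2 ^ (Nat.card S).factorization 2 := pow_dvd_pow 2 (by omega)
      _ ∣ Nat.card S := Nat.ordProj_dvd _ _
    have hG0 : Nat.card (affPerm H) ≠ 0 := Nat.card_pos.ne'
    have hfG : 2 ≤ (Nat.card (affPerm H)).factorization 2 :=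
      (Nat.Prime.pow_dvd_iff_le_factorization Nat.prime_two hG0).mp hG4
    rw [← hSdef]
    simp only [pPart]
    calc (2:ℕ) ^ (Nat.card S).factorization 2 ≤ 2 ^ 1 :=
      Nat.pow_le_pow_right (by norm_num) hfS
    _ < 2 ^ 2 := by norm_num
    _ ≤ 2 ^ (Nat.card (affPerm H)).factorization 2 :=
      Nat.pow_le_pow_right (by norm_num) hfG
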